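/- If M ∈ GL₂(A) has finite order, then the trace of M lies in the image of 𝔽_q and the determinant of M lies in the image of 𝔽_q^×; consequently the characteristic polynomial of M splits over 𝔽_{q²}, i.e. every root λ of the characteristic polynomial of M in an algebraic closure of the fraction field of A satisfies λ^{q²} = λ. -/

import Mathlib

open Matrix Polynomial

/-- **Lemma 3.2.** If `M ∈ GL₂(A)` has finite order, then its trace lies in the image of
`𝔽_q`, its determinant lies in the image of `𝔽_q^×`, and every root of its characteristic
polynomial in an algebraic closure of the fraction field of `A` satisfies `λ^{q²} = λ`
(i.e. the characteristic polynomial splits over `𝔽_{q²}`). -/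
theorem stmt_14 (Fq : Type*) [Field Fq] [Fintype Fq] (q : ℕ) (hq : Fintype.card Fq = q)
    (A : Type*) [CommRing A] [IsDomain A] [Algebra Fq A]
    (halg : ∀ a : A, IsAlgebraic Fq a → ∃ α : Fq, algebraMap Fq A α = a)
    (K : Type*) [Field K] [Algebra A K] [IsFractionRing A K]
    (L : Type*) [Field L] [Algebra K L] [IsAlgClosed L] [Algebra.IsAlgebraic K L]
    [Algebra A L] [IsScalarTower A K L]
    (M : GL (Fin 2) A) (hM : IsOfFinOrder M) :
    (∃ α : Fq, algebraMap Fq A α = (↑M : Matrix (Fin 2) (Fin 2) A).trace) ∧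
      (∃ β : Fqˣ, algebraMap Fq A (β : Fq) = (↑M : Matrix (Fin 2) (Fin 2) A).det) ∧
      ∀ lam : L, Polynomial.aeval lam (↑M : Matrix (Fin 2) (Fin 2) A).charpoly = 0 →
        lam ^ q ^ 2 = lam := by
  obtain ⟨n, hn, hMn⟩ := isOfFinOrder_iff_pow_eq_one.mp hM
  set f : A →+* L := algebraMap A L with hf
  have hfinj : Function.Injective f := by
    rw [hf, IsScalarTower.algebraMap_eq A K L]
    exact (algebraMap K L).injective.comp (IsFractionRing.injective A K)
  letI : Algebra Fq L := ((algebraMap A L).comp (algebraMap Fq A)).toAlgebra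
  letI : IsScalarTower Fq A L := IsScalarTower.of_algebraMap_eq fun x => rfl
  set Mm : Matrix (Fin 2) (Fin 2) A := (↑M : Matrix (Fin 2) (Fin 2) A) with hMm
  set N : Matrix (Fin 2) (Fin 2) L := Mm.map f with hN
  have hMn' : Mm ^ n = 1 := by
    have : ((M ^ n : GL (Fin 2) A) : Matrix (Fin 2) (Fin 2) A) = Mm ^ n := by
      simp [hMm, Units.val_pow_eq_pow_val]
    rw [← this, hMn]; rfl
  have hNn : N ^ n = 1 := by
    have : N = f.mapMatrix Mm := rfl
    rw [this, ← _root_.map_pow, hMn', _root_.map_one]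
  -- every root of the characteristic polynomial in L is an n-th root of unity
  have key : ∀ lam : L, Polynomial.aeval lam Mm.charpoly = 0 → lam ^ n = 1 := by
    intro lam hlam
    have h1 : eval lam (Mm.charpoly.map f) = 0 := by
      rwa [eval_map, ← aeval_def]
    rw [← Matrix.charpoly_map] at h1
    have h2 : (lam • (1 : Matrix (Fin 2) (Fin 2) L) - N).det = 0 := by
      have hmap : (charmatrix N).map (evalRingHom lam) =
          lam • (1 : Matrix (Fin 2) (Fin 2) L) - N := by
        ext i j
        by_cases h : i = j
        · subst h; simp [charmatrix_apply_eq, Matrix.one_apply]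
        · simp [charmatrix_apply_ne _ _ _ h, Matrix.one_apply, h]
      have hdet := (RingHom.map_det (evalRingHom lam) (charmatrix N)).symm
      rw [RingHom.mapMatrix_apply, hmap] at hdet
      rw [hdet]
      simpa [Matrix.charpoly, coe_evalRingHom] using h1
    obtain ⟨v, hv0, hv⟩ := Matrix.exists_mulVec_eq_zero_iff.mpr h2
    have hNv : N *ᵥ v = lam • v := by
      have := hv
      rw [Matrix.sub_mulVec, Matrix.smul_mulVec, Matrix.one_mulVec, sub_eq_zero] at this
      exact this.symm
    have hpow : ∀ k : ℕ, (N ^ k) *ᵥ v = (lam ^ k) • v := by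
      intro k
      induction k with
      | zero => simp [Matrix.one_mulVec]
      | succ k ih =>
        rw [pow_succ, ← Matrix.mulVec_mulVec, hNv, Matrix.mulVec_smul, ih, smul_smul, pow_succ]
        ring_nf
    have hfinal : v = (lam ^ n) • v := by
      have := hpow n
      rwa [hNn, Matrix.one_mulVec] at this
    obtain ⟨i, hi⟩ := Function.ne_iff.mp hv0
    have : v i = lam ^ n * v i := by
      conv_lhs => rw [hfinal]
      simp
    have h3 : (lam ^ n - 1) * v i = 0 := by rw [sub_mul, one_mul, ← this, sub_self]
    rcases mul_eq_zero.mp h3 with h | h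
    · exact sub_eq_zero.mp h
    · exact absurd h hi
  -- the characteristic polynomial is X² - (tr M)·X + det M
  set t : A := Mm.trace with ht
  set d : A := Mm.det with hd
  have hcp : Mm.charpoly = X ^ 2 - C t * X + C d := by
    rw [Matrix.charpoly, Matrix.det_fin_two]
    simp [ht, hd, Matrix.trace_fin_two, Matrix.det_fin_two]
    ring
  have haev : ∀ lam : L, Polynomial.aeval lam Mm.charpoly =
      lam ^ 2 - f t * lam + f d := by
    intro lam
    rw [hcp]
    simp [aeval_def, eval₂_sub, eval₂_add, eval₂_mul, eval₂_pow]
    rfl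
  -- find the two roots of the characteristic polynomial in L
  have hdeg : (Mm.charpoly.map f).degree ≠ 0 := by
    have hmonic : Mm.charpoly.Monic := Mm.charpoly_monic
    have : (Mm.charpoly.map f).natDegree = 2 := by
      rw [hmonic.natDegree_map, Mm.charpoly_natDegree_eq_dim, Fintype.card_fin]
    intro h
    rw [Polynomial.degree_eq_natDegree (fun h0 => by simp [h0] at this), this] at h
    exact two_ne_zero (by exact_mod_cast h)
  obtain ⟨l1, hl1⟩ := IsAlgClosed.exists_root (Mm.charpoly.map f) hdeg
  have hroot1 : Polynomial.aeval l1 Mm.charpoly = 0 := by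
    rwa [aeval_def, ← eval_map]
  set l2 : L := f t - l1 with hl2
  have heq1 : l1 ^ 2 - f t * l1 + f d = 0 := by rw [← haev l1]; exact hroot1
  have hroot2 : Polynomial.aeval l2 Mm.charpoly = 0 := by
    rw [haev l2, hl2]; linear_combination heq1
  -- roots are roots of unity, hence integral over Fq
  have hint : ∀ lam : L, lam ^ n = 1 → IsIntegral Fq lam := by
    intro lam hlam
    refine ⟨X ^ n - C 1, monic_X_pow_sub_C 1 hn.ne', ?_⟩
    simp [eval₂_sub, eval₂_pow, hlam]
  have hi1 : IsIntegral Fq l1 := hint l1 (key l1 hroot1)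
  have hi2 : IsIntegral Fq l2 := hint l2 (key l2 hroot2)
  -- trace and determinant are algebraic over Fq
  have htL : f t = l1 + l2 := by rw [hl2]; ring
  have hdL : f d = l1 * l2 := by rw [hl2]; linear_combination heq1
  have halgt : IsAlgebraic Fq t := by
    rw [← isAlgebraic_algebraMap_iff (A := L) hfinj]
    show IsAlgebraic Fq (f t)
    rw [htL]
    exact (hi1.add hi2).isAlgebraic
  have halgd : IsAlgebraic Fq d := by
    rw [← isAlgebraic_algebraMap_iff (A := L) hfinj]
    show IsAlgebraic Fq (f d)
    rw [hdL]
    exact (hi1.mul hi2).isAlgebraic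
  obtain ⟨α, hα⟩ := halg t halgt
  obtain ⟨δ, hδ⟩ := halg d halgd
  have hdunit : IsUnit d := by
    rw [hd, hMm]
    exact (Units.isUnit M).map Matrix.detMonoidHom
  have hδ0 : δ ≠ 0 := by
    intro h0
    rw [h0, map_zero] at hδ
    exact hdunit.ne_zero hδ.symm
  refine ⟨⟨α, hα⟩, ⟨Units.mk0 δ hδ0, hδ⟩, ?_⟩
  -- the splitting statement
  intro lam hlam
  -- Frobenius setup
  set p : ℕ := ringChar Fq with hp
  obtain ⟨k, hpprime, hcard⟩ := FiniteField.card Fq p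
  haveI : Fact p.Prime := ⟨hpprime⟩
  haveI : CharP L p := charP_of_injective_ringHom
    (show Function.Injective (algebraMap Fq L) from (algebraMap Fq L).injective) p
  rw [hq] at hcard
  have hfrobadd : ∀ x y : L, (x + y) ^ q = x ^ q + y ^ q := by
    intro x y; rw [hcard]; exact add_pow_char_pow x y p k
  have hfrobsub : ∀ x y : L, (x - y) ^ q = x ^ q - y ^ q := by
    intro x y; rw [hcard]; exact sub_pow_char_pow x y k
  -- the coefficients are fixed by the q-power map
  have hfix : ∀ γ : Fq, (f (algebraMap Fq A γ)) ^ q = f (algebraMap Fq A γ) := by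
    intro γ
    rw [← map_pow, ← map_pow, ← hq, FiniteField.pow_card]
  have htq : (f t) ^ q = f t := by rw [← hα]; exact hfix α
  have hdq : (f d) ^ q = f d := by rw [← hδ]; exact hfix δ
  -- lam is a root of the quadratic
  have heql : lam ^ 2 - f t * lam + f d = 0 := by rw [← haev lam]; exact hlam
  set mu : L := lam ^ q with hmu
  have hq0 : q ≠ 0 := by rw [← hq]; exact Fintype.card_ne_zero
  have heqm : mu ^ 2 - f t * mu + f d = 0 := by
    have h0 : (lam ^ 2 - f t * lam + f d) ^ q = (0 : L) ^ q := by rw [heql]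
    rw [hfrobadd, hfrobsub, mul_pow, htq, hdq, ← pow_mul, mul_comm 2 q, pow_mul,
      zero_pow hq0] at h0
    rw [hmu]
    exact h0
  have hsplit : (lam - mu) * (lam + mu - f t) = 0 := by linear_combination heql - heqm
  have hpow2 : lam ^ q ^ 2 = mu ^ q := by rw [hmu, ← pow_mul, pow_two]
  rcases mul_eq_zero.mp hsplit with h | h
  · have hlm : lam = mu := sub_eq_zero.mp h
    calc lam ^ q ^ 2 = mu ^ q := hpow2
      _ = lam ^ q := by rw [← hlm]
      _ = mu := hmu.symm
      _ = lam := hlm.symm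
  · have hsum : lam + mu = f t := by linear_combination h
    have h2 : mu + mu ^ q = lam + mu := by
      have h3 : lam ^ q + mu ^ q = lam + mu := by rw [← hfrobadd, hsum, htq]
      rw [← hmu] at h3
      exact h3
    have hmq : mu ^ q = lam := by linear_combination h2
    rw [hpow2, hmq]
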